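/- If S is a nonempty totally dependent set of scaled vectors in ℝ≥0^n, then S is infinite. -/

import Mathlib

open scoped NNReal

/-- The max-algebraic span of `S`: all vectors `⨆_{x ∈ S} λ_x • x` where only
finitely many coefficients `λ_x` are nonzero (`MaxSpan ∅ = {0}`). -/
def MaxSpan {n : ℕ} (S : Set (Fin n → ℝ≥0)) : Set (Fin n → ℝ≥0) :=
  {u | ∃ (F : Finset (Fin n → ℝ≥0)) (lam : (Fin n → ℝ≥0) → ℝ≥0),
    ↑F ⊆ S ∧ u = F.sup (fun x => lam x • x)}

/-- A max cone: a subset of `ℝ≥0ⁿ` closed under pointwise max `⊔` and under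
multiplication by nonnegative scalars. -/
def MaxCone {n : ℕ} (K : Set (Fin n → ℝ≥0)) : Prop :=
  0 ∈ K ∧ (∀ x ∈ K, ∀ y ∈ K, x ⊔ y ∈ K) ∧ (∀ (c : ℝ≥0), ∀ x ∈ K, c • x ∈ K)

/-- `u` is an extremal in `K` if `u = v ⊔ w` with `v, w ∈ K` implies `u = v` or `u = w`. -/
def IsExtremal {n : ℕ} (K : Set (Fin n → ℝ≥0)) (u : Fin n → ℝ≥0) : Prop :=
  u ∈ K ∧ ∀ v ∈ K, ∀ w ∈ K, u = v ⊔ w → u = v ∨ u = w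

/-- A vector is scaled if its max norm `⨆ i, x i` equals `1`. -/
def Scaled {n : ℕ} (x : Fin n → ℝ≥0) : Prop := (⨆ i, x i) = 1

/-- The support of a vector. -/
def supp {n : ℕ} (v : Fin n → ℝ≥0) : Set (Fin n) := {j | 0 < v j}

/-- For `j ∈ supp u`, `rescale u j = (1 / u j) • u`, the `j`-scaling `u(j)`. -/
noncomputable def rescale {n : ℕ} (u : Fin n → ℝ≥0) (j : Fin n) : Fin n → ℝ≥0 :=
  (u j)⁻¹ • u

/-- `T(j) = {u(j) : u ∈ T, j ∈ supp u}`. -/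
noncomputable def setScale {n : ℕ} (T : Set (Fin n → ℝ≥0)) (j : Fin n) :
    Set (Fin n → ℝ≥0) :=
  {y | ∃ u ∈ T, j ∈ supp u ∧ y = rescale u j}

/-- `u` is minimal in `T` if `v ∈ T` and `v ≤ u` imply `v = u`. -/
def MinimalIn {n : ℕ} (T : Set (Fin n → ℝ≥0)) (u : Fin n → ℝ≥0) : Prop :=
  u ∈ T ∧ ∀ v ∈ T, v ≤ u → v = u

/-- A set is totally dependent if each of its elements is a max combination of
the remaining ones. -/
def TotallyDependent {n : ℕ} (S : Set (Fin n → ℝ≥0)) : Prop :=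
  ∀ x ∈ S, x ∈ MaxSpan (S \ {x})

/-- A set is independent if none of its elements is a max combination of
the remaining ones. -/
def IndependentSet {n : ℕ} (S : Set (Fin n → ℝ≥0)) : Prop :=
  ∀ x ∈ S, x ∉ MaxSpan (S \ {x})

/-- A basis for `K` is an independent set of generators for `K`. -/
def IsBasis {n : ℕ} (S K : Set (Fin n → ℝ≥0)) : Prop :=
  IndependentSet S ∧ MaxSpan S = K

/-- a nonempty totally dependent set of scaled vectors is
infinite. -/
theorem stmt10 {n : ℕ} (S : Set (Fin n → ℝ≥0)) (hne : S.Nonempty)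
    (hSsc : ∀ x ∈ S, Scaled x) (hdep : TotallyDependent S) :
    S.Infinite := by
  -- Key claim: every x ∈ S has a y ∈ S with y ≠ x and y ≤ x.
  have key : ∀ x ∈ S, ∃ y ∈ S, y ≠ x ∧ y ≤ x := by
    intro x hx
    obtain ⟨F, lam, hFsub, hxeq⟩ := hdep x hx
    have hxsc : (⨆ i, x i) = 1 := hSsc x hx
    -- n > 0 since otherwise the sup is 0
    have hn : 0 < n := by
      by_contra h
      have : IsEmpty (Fin n) := by
        constructor; intro j; exact absurd j.isLt (by omega)
      rw [ciSup_of_empty] at hxsc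
      simp at hxsc
    haveI : NeZero n := ⟨by omega⟩
    -- the sup is attained at some i
    obtain ⟨i, hi⟩ := Finite.exists_max x
    have hxi : x i = 1 := by
      refine le_antisymm ?_ ?_
      · rw [← hxsc]; exact le_ciSup (Set.Finite.bddAbove (Set.finite_range x)) i
      · rw [← hxsc]; exact ciSup_le hi
    -- F is nonempty
    have hFne : F.Nonempty := by
      rcases F.eq_empty_or_nonempty with h | h
      · exfalso
        rw [h] at hxeq
        simp [Finset.sup_empty] at hxeq
        rw [hxeq] at hxi
        simp at hxi
      · exact h
    -- evaluate at i
    have hxi' : x i = F.sup (fun y => lam y * y i) := by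
      rw [hxeq]
      rw [Finset.sup_apply]
      rfl
    obtain ⟨y, hyF, hy⟩ := Finset.exists_mem_eq_sup F hFne (fun y => lam y * y i)
    have hyS : y ∈ S \ {x} := hFsub hyF
    have hysc : (⨆ j, y j) = 1 := hSsc y hyS.1
    have hyx : lam y * y i = 1 := by rw [← hy, ← hxi', hxi]
    have hyi_le : y i ≤ 1 := by
      rw [← hysc]; exact le_ciSup (Set.Finite.bddAbove (Set.finite_range y)) i
    have hlam : 1 ≤ lam y := by
      by_contra h
      push_neg at h
      have : lam y * y i < 1 := by
        calc lam y * y i ≤ lam y * 1 := mul_le_mul_right hyi_le _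
          _ = lam y := mul_one _
          _ < 1 := h
      rw [hyx] at this; simp at this
    have hle : y ≤ x := by
      intro j
      calc y j = 1 * y j := (one_mul _).symm
        _ ≤ lam y * y j := by exact mul_le_mul_left hlam _
        _ ≤ x j := by
            have hle' : lam y • y ≤ x := by
              rw [hxeq]; exact Finset.le_sup (f := fun z => lam z • z) hyF
            exact hle' j
    exact ⟨y, hyS.1, hyS.2, hle⟩
  -- If S were finite, it would have a minimal element, contradiction.
  intro hfin
  obtain ⟨a, haS, hamin⟩ := Set.Finite.exists_minimalFor id S hfin hne
  obtain ⟨y, hyS, hyne, hyle⟩ := key a haS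
  exact hyne (le_antisymm hyle (hamin hyS hyle))
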